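/- If C_kh(X) has a countable neighborhood base at the constant zero function, then X is hemicompact. -/

import Mathlib

open Set TopologicalSpace Filter

/-- The open-point topology on `C(X, ℝ)`, generated by the sets
`[U, r]⁻ = {f | ∃ x ∈ U, f x = r}` for `U` open in `X` and `r : ℝ`. -/
def openPointTop (X : Type*) [TopologicalSpace X] : TopologicalSpace C(X, ℝ) :=
  generateFrom {S | ∃ (U : Set X) (r : ℝ), IsOpen U ∧ S = {f : C(X, ℝ) | ∃ x ∈ U, f x = r}}

/-- The point-open topology (topology of pointwise convergence) on `C(X, ℝ)`. -/
def pointOpenTop (X : Type*) [TopologicalSpace X] : TopologicalSpace C(X, ℝ) :=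
  generateFrom {S | ∃ (x : X) (V : Set ℝ), IsOpen V ∧ S = {f : C(X, ℝ) | f x ∈ V}}

/-- The bi-compact-open topology `kh`: the join (coarsest common refinement) of the
compact-open topology and the open-point topology.  In Mathlib's order on
`TopologicalSpace` (where smaller = finer), this join is `⊓`. -/
def biCompactOpenTop (X : Type*) [TopologicalSpace X] : TopologicalSpace C(X, ℝ) :=
  ContinuousMap.compactOpen ⊓ openPointTop X

/-- The bi-point-open topology `ph`: the join of the point-open topology and the
open-point topology. -/
def biPointOpenTop (X : Type*) [TopologicalSpace X] : TopologicalSpace C(X, ℝ) :=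
  pointOpenTop X ⊓ openPointTop X

/-- `lc X` is the set of points of `X` having a compact neighborhood. -/
def lcSet (X : Type*) [TopologicalSpace X] : Set X :=
  {x | ∃ K : Set X, IsCompact K ∧ K ∈ nhds x}

/-- A set `A` is `Gδ`-dense if every nonempty `Gδ`-set meets it. -/
def GdeltaDense {X : Type*} [TopologicalSpace X] (A : Set X) : Prop :=
  ∀ G : Set X, IsGδ G → G.Nonempty → (G ∩ A).Nonempty

/-- A nonempty set `B` is an `R`-set if countably many continuous real functions
map it onto all of `ℝ`. -/
def IsRSet {X : Type*} [TopologicalSpace X] (B : Set X) : Prop :=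
  B.Nonempty ∧ ∃ f : ℕ → C(X, ℝ), (⋃ n, (f n) '' B) = Set.univ

/-- `X` is `R`-separable if there is a countable collection of `R`-sets such that
every nonempty open set contains a member of the collection. -/
def RSeparable (X : Type*) [TopologicalSpace X] : Prop :=
  ∃ S : ℕ → Set X, (∀ n, IsRSet (S n)) ∧
    ∀ U : Set X, IsOpen U → U.Nonempty → ∃ n, S n ⊆ U

/-- A topology is submetrizable if it is finer than some metrizable topology. -/
def Submetrizable (α : Type*) [t : TopologicalSpace α] : Prop :=
  ∃ t' : TopologicalSpace α, @MetrizableSpace α t' ∧ t ≤ t'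

/-- `X` is hemicompact if there is a sequence of compact sets cofinal in the
compact subsets of `X`. -/
def Hemicompact (X : Type*) [TopologicalSpace X] : Prop :=
  ∃ K : ℕ → Set X, (∀ n, IsCompact (K n)) ∧ ∀ A : Set X, IsCompact A → ∃ n, A ⊆ K n

/-- `X` is almost σ-compact if it has a dense σ-compact subset. -/
def AlmostSigmaCompact (X : Type*) [TopologicalSpace X] : Prop :=
  ∃ K : ℕ → Set X, (∀ n, IsCompact (K n)) ∧ Dense (⋃ n, K n)

lemma mem_nhds_generateFrom_finite {α : Type*} {g : Set (Set α)} {a : α} {B : Set α}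
    (h : B ∈ @nhds α (generateFrom g) a) :
    ∃ T : Set (Set α), T ⊆ {s | a ∈ s ∧ s ∈ g} ∧ T.Finite ∧ ⋂₀ T ⊆ B := by
  rw [nhds_generateFrom, ← Filter.generate_eq_biInf, Filter.mem_generate_iff] at h
  obtain ⟨T, hT, hfin, hsub⟩ := h
  exact ⟨T, hT, hfin, hsub⟩

lemma key {X : Type*} [TopologicalSpace X] {B : Set C(X, ℝ)}
    (h : B ∈ @nhds C(X, ℝ) (biCompactOpenTop X) 0) :
    ∃ K : Set X, IsCompact K ∧ {f : C(X, ℝ) | ∀ x ∈ K, f x = 0} ⊆ B := by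
  rw [biCompactOpenTop, _root_.nhds_inf, Filter.mem_inf_iff] at h
  obtain ⟨V, hV, W, hW, rfl⟩ := h
  -- compact-open part
  rw [ContinuousMap.compactOpen_eq] at hV
  obtain ⟨T1, hT1, hfin1, hsub1⟩ := mem_nhds_generateFrom_finite hV
  have hfin1' : Finite T1 := hfin1
  have hco : ∀ s : T1, ∃ (K : Set X) (U : Set ℝ), IsCompact K ∧ IsOpen U ∧
      (s : Set C(X, ℝ)) = {f : C(X, ℝ) | MapsTo ⇑f K U} := by
    rintro ⟨s, hs⟩
    obtain ⟨-, K, hK, U, hU, rfl⟩ := hT1 hs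
    exact ⟨K, U, hK, hU, rfl⟩
  choose Ks Us hKc hUo hseq using hco
  -- open-point part
  rw [openPointTop] at hW
  obtain ⟨T2, hT2, hfin2, hsub2⟩ := mem_nhds_generateFrom_finite hW
  have hfin2' : Finite T2 := hfin2
  have hop : ∀ s : T2, ∃ p : X, ∀ f : C(X, ℝ), f p = 0 → f ∈ (s : Set C(X, ℝ)) := by
    rintro ⟨s, hs⟩
    obtain ⟨h0, U, r, hU, rfl⟩ := hT2 hs
    obtain ⟨x, hxU, hx0⟩ := h0
    exact ⟨x, fun f hf => ⟨x, hxU, by rw [hf, ← hx0]; rfl⟩⟩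
  choose p hp using hop
  refine ⟨(⋃ s : T1, Ks s) ∪ (⋃ s : T2, {p s}), ?_, ?_⟩
  · exact (isCompact_iUnion fun s => hKc s).union
      (isCompact_iUnion fun s => isCompact_singleton)
  · intro f hf
    constructor
    · apply hsub1
      rintro s hs
      have h0 : (0 : C(X, ℝ)) ∈ s := (hT1 hs).1
      have heq : s = {f : C(X, ℝ) | MapsTo ⇑f (Ks ⟨s, hs⟩) (Us ⟨s, hs⟩)} := hseq ⟨s, hs⟩
      rw [heq] at h0 ⊢
      intro x hx
      have hfx : f x = 0 := hf x (Or.inl (mem_iUnion.2 ⟨⟨s, hs⟩, hx⟩))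
      rw [hfx]
      exact h0 hx
    · apply hsub2
      rintro s hs
      exact hp ⟨s, hs⟩ f (hf _ (Or.inr (mem_iUnion.2 ⟨⟨s, hs⟩, rfl⟩)))

theorem stmt13 {X : Type*} [TopologicalSpace X] [T2Space X] [CompletelyRegularSpace X]
    (h : (@nhds C(X, ℝ) (biCompactOpenTop X) 0).IsCountablyGenerated) :
    Hemicompact X := by
  have := h
  obtain ⟨b, hb⟩ := (@nhds C(X, ℝ) (biCompactOpenTop X) 0).exists_antitone_basis
  have hmem : ∀ n, b n ∈ @nhds C(X, ℝ) (biCompactOpenTop X) 0 :=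
    fun n => hb.1.mem_of_mem trivial
  choose K hKc hKsub using fun n => key (hmem n)
  refine ⟨K, hKc, ?_⟩
  intro A hA
  by_contra hc
  push_neg at hc
  -- the neighborhood of 0 given by A
  set W : Set C(X, ℝ) := {f | MapsTo f A (Metric.ball (0 : ℝ) 1)} with hWdef
  have hWopen : @IsOpen C(X, ℝ) (biCompactOpenTop X) W :=
    (ContinuousMap.isOpen_setOf_mapsTo hA Metric.isOpen_ball).mono inf_le_left
  have hW0 : (0 : C(X, ℝ)) ∈ W := fun x _ => by
    simpa using Metric.mem_ball_self one_pos
  have hWnhds : W ∈ @nhds C(X, ℝ) (biCompactOpenTop X) 0 :=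
    @IsOpen.mem_nhds C(X, ℝ) (biCompactOpenTop X) 0 W hWopen hW0
  obtain ⟨n, -, hn⟩ := hb.1.mem_iff.mp hWnhds
  obtain ⟨x, hxA, hxK⟩ := Set.not_subset.mp (hc n)
  obtain ⟨f, hfc, hfx, hfK⟩ := CompletelyRegularSpace.completely_regular x (K n)
    ((hKc n).isClosed) hxK
  set g : C(X, ℝ) := ⟨fun y => 1 - (f y : ℝ),
    continuous_const.sub (continuous_subtype_val.comp hfc)⟩ with hgdef
  have hgK : ∀ y ∈ K n, g y = 0 := by
    intro y hy
    have : f y = 1 := hfK hy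
    simp [hgdef, this]
  have hgW : g ∈ W := hn (hKsub n hgK)
  have := hgW hxA
  rw [Metric.mem_ball, Real.dist_eq] at this
  have hgx : g x = 1 := by simp [hgdef, hfx]
  rw [hgx] at this
  norm_num at this
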